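/- Let X_1, …, X_n be i.i.d. p-dimensional Gaussian random vectors with mean 0 and positive definite covariance matrix Σ* = (σ*_{ij}), Ω* = (Σ*)^{-1} with i-th column w*_i, and V_n = n^{-1} ∑_{k=1}^n X_k X_k^T. Fix indices i ≠ j with ω*_{ij} = 0, let B_{i,0} be the p × s_i matrix of distinct standard basis vectors indexing the support of w*_i, Ω_i* = (B_{i,0}^T Σ* B_{i,0})^{-1}, and a = e_j − B_{i,0} Ω_i* B_{i,0}^T Σ* e_j. Then E(a^T V_n w*_i) = 0 and Var(a^T V_n w*_i) = ( ω*_{ii} σ*_{jj} − ω*_{ii} e_j^T Σ* B_{i,0} Ω_i* B_{i,0}^T Σ* e_j )/n. -/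

import Mathlib

open MeasureTheory ProbabilityTheory Matrix Filter Real

noncomputable section

/-- A random vector `X` on a probability space is Gaussian with mean `m` and covariance
matrix `S`: every linear functional of `X` has a one-dimensional Gaussian distribution. -/
def IsGaussianRV {Ω : Type*} [MeasureSpace Ω] {p : ℕ}
    (m : Fin p → ℝ) (S : Matrix (Fin p) (Fin p) ℝ) (X : Ω → Fin p → ℝ) : Prop :=
  Measurable X ∧ ∀ a : Fin p → ℝ,
    Measure.map (fun ω => ∑ i, a i * X ω i) volume
      = gaussianReal (∑ i, a i * m i) (Real.toNNReal (a ⬝ᵥ S.mulVec a))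

/-- `X_1, …, X_n` are i.i.d. Gaussian vectors with mean `m` and covariance `S`. -/
def IsIIDGaussian {Ω : Type*} [MeasureSpace Ω] {n p : ℕ}
    (m : Fin p → ℝ) (S : Matrix (Fin p) (Fin p) ℝ) (X : Fin n → Ω → Fin p → ℝ) : Prop :=
  iIndepFun X volume ∧ ∀ k, IsGaussianRV m S (X k)

/-- `V_n = n⁻¹ ∑_{k=1}^n X_k X_kᵀ`. -/
def Vmat {Ω : Type*} {n p : ℕ} (X : Fin n → Ω → Fin p → ℝ) (ω : Ω) :
    Matrix (Fin p) (Fin p) ℝ :=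
  (n : ℝ)⁻¹ • Matrix.of fun a b => ∑ k, X k ω a * X k ω b

/-- The `p × s` selection matrix whose `b`-th column is the standard basis vector `e_{φ b}`. -/
def selMat {p s : ℕ} (φ : Fin s → Fin p) : Matrix (Fin p) (Fin s) ℝ :=
  Matrix.of fun a b => if a = φ b then 1 else 0

set_option linter.unusedSectionVars false
set_option linter.unusedVariables false

section AuxGaussian
open scoped NNReal ENNReal


variable {v : ℝ≥0}

lemma pdf_eq (hv : v ≠ 0) (x : ℝ) :
    gaussianPDFReal 0 v x = (√(2 * π * v))⁻¹ * rexp (-(2 * (v:ℝ))⁻¹ * x ^ 2) := by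
  rw [gaussianPDFReal]
  congr 1
  rw [sub_zero]
  congr 1
  have hv' : (v:ℝ) ≠ 0 := by exact_mod_cast hv
  field_simp

lemma gaussianReal_eq_withDensity (hv : v ≠ 0) :
    gaussianReal 0 v = volume.withDensity
      (fun x => ((Real.toNNReal (gaussianPDFReal 0 v x) : ℝ≥0) : ℝ≥0∞)) := by
  rw [gaussianReal_of_var_ne_zero 0 hv]
  rfl

lemma meas_pdf : Measurable (fun x => Real.toNNReal (gaussianPDFReal 0 v x)) :=
  (measurable_gaussianPDFReal 0 v).real_toNNReal

lemma integral_gaussianReal_eq (hv : v ≠ 0) (g : ℝ → ℝ) :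
    ∫ x, g x ∂(gaussianReal 0 v) = ∫ x, gaussianPDFReal 0 v x * g x := by
  rw [gaussianReal_eq_withDensity hv, integral_withDensity_eq_integral_smul meas_pdf]
  congr 1; ext x
  simp [NNReal.smul_def, Real.coe_toNNReal _ (gaussianPDFReal_nonneg 0 v x)]

lemma integrable_gaussianReal_iff (hv : v ≠ 0) {g : ℝ → ℝ} :
    Integrable g (gaussianReal 0 v) ↔ Integrable (fun x => gaussianPDFReal 0 v x * g x) := by
  rw [gaussianReal_eq_withDensity hv, integrable_withDensity_iff_integrable_smul meas_pdf]
  have hcong : ∀ x : ℝ, (Real.toNNReal (gaussianPDFReal 0 v x)) • g x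
      = gaussianPDFReal 0 v x * g x := by
    intro x
    simp [NNReal.smul_def, Real.coe_toNNReal _ (gaussianPDFReal_nonneg 0 v x)]
  constructor
  · intro h
    exact h.congr (Filter.Eventually.of_forall hcong)
  · intro h
    exact h.congr (Filter.Eventually.of_forall fun x => (hcong x).symm)

lemma intPoly' {b : ℝ} (hb : 0 < b) (k : ℕ) :
    Integrable (fun x : ℝ => x ^ k * rexp (-b * x ^ 2)) := by
  have := integrable_rpow_mul_exp_neg_mul_sq hb (s := (k : ℝ))
    (lt_of_lt_of_le neg_one_lt_zero (Nat.cast_nonneg k))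
  simpa [Real.rpow_natCast] using this

lemma hbpos (hv : v ≠ 0) : 0 < (2 * (v:ℝ))⁻¹ := by
  have : (0:ℝ) < v := by positivity
  positivity

lemma integrable_pow_gaussianReal (v : ℝ≥0) (k : ℕ) :
    Integrable (fun x => x ^ k) (gaussianReal 0 v) := by
  by_cases hv : v = 0
  · subst hv
    rw [gaussianReal_zero_var]
    exact (integrable_const ((0:ℝ) ^ k)).congr (ae_eq_dirac (fun x : ℝ => x ^ k)).symm
  · rw [integrable_gaussianReal_iff hv]
    have := (intPoly' (hbpos hv) k).const_mul (√(2 * π * v))⁻¹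
    apply this.congr
    filter_upwards with x
    rw [pdf_eq hv]
    ring

lemma mom_rec' {b : ℝ} (hb : 0 < b) (k : ℕ) :
    ∫ x : ℝ, x ^ (k + 2) * rexp (-b * x ^ 2)
      = ((k + 1 : ℝ) / (2 * b)) * ∫ x : ℝ, x ^ k * rexp (-b * x ^ 2) := by
  have hderiv : ∀ x : ℝ, HasDerivAt (fun x : ℝ => x ^ (k + 1) * rexp (-b * x ^ 2))
      ((k + 1 : ℝ) * x ^ k * rexp (-b * x ^ 2) - 2 * b * (x ^ (k + 2) * rexp (-b * x ^ 2))) x := by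
    intro x
    have h1 : HasDerivAt (fun x : ℝ => x ^ (k + 1)) ((k + 1 : ℝ) * x ^ k) x := by
      simpa using hasDerivAt_pow (k + 1) x
    have h2 : HasDerivAt (fun x : ℝ => rexp (-b * x ^ 2)) (rexp (-b * x ^ 2) * (-b * (2 * x))) x := by
      have : HasDerivAt (fun x : ℝ => -b * x ^ 2) (-b * (2 * x)) x := by
        simpa using ((hasDerivAt_pow 2 x).const_mul (-b))
      exact this.exp
    have : HasDerivAt (fun x : ℝ => x ^ (k + 1) * rexp (-b * x ^ 2)) _ x := h1.mul h2
    convert this using 1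
    ring
  have hint : Integrable (fun x : ℝ => (k + 1 : ℝ) * x ^ k * rexp (-b * x ^ 2)
      - 2 * b * (x ^ (k + 2) * rexp (-b * x ^ 2))) := by
    apply Integrable.sub
    · simpa [mul_assoc] using (intPoly' hb k).const_mul ((k : ℝ) + 1)
    · exact ((intPoly' hb (k + 2))).const_mul (2 * b)
  have hf : Integrable (fun x : ℝ => x ^ (k + 1) * rexp (-b * x ^ 2)) := intPoly' hb (k + 1)
  have h0 := integral_eq_zero_of_hasDerivAt_of_integrable hderiv hint hf
  rw [integral_sub (by simpa [mul_assoc] using (intPoly' hb k).const_mul ((k : ℝ) + 1))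
      (((intPoly' hb (k + 2))).const_mul (2 * b))] at h0
  rw [integral_const_mul] at h0
  have h1 : ∫ x : ℝ, (k + 1 : ℝ) * x ^ k * rexp (-b * x ^ 2)
      = (k + 1 : ℝ) * ∫ x : ℝ, x ^ k * rexp (-b * x ^ 2) := by
    rw [← integral_const_mul]; congr 1; ext x; ring
  rw [h1] at h0
  have hb' : (2 * b) ≠ 0 := by positivity
  rw [div_mul_eq_mul_div, eq_div_iff hb']
  linarith [h0]

lemma moment_rec_gaussian (hv : v ≠ 0) (k : ℕ) :
    ∫ x, x ^ (k + 2) ∂(gaussianReal 0 v)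
      = ((k + 1 : ℝ)) * v * ∫ x, x ^ k ∂(gaussianReal 0 v) := by
  have hb := hbpos hv
  have key : ∀ m : ℕ, ∫ x, gaussianPDFReal 0 v x * x ^ m
      = (√(2 * π * v))⁻¹ * ∫ x : ℝ, x ^ m * rexp (-(2 * (v:ℝ))⁻¹ * x ^ 2) := by
    intro m
    rw [← integral_const_mul]
    congr 1; ext x
    rw [pdf_eq hv]; ring
  rw [integral_gaussianReal_eq hv, integral_gaussianReal_eq hv, key, key,
    mom_rec' hb k]
  have hv' : (0:ℝ) < v := by positivity
  have : (k + 1 : ℝ) / (2 * (2 * (v:ℝ))⁻¹) = (k + 1 : ℝ) * v := by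
    have h2 : (0:ℝ) < 2 * (v:ℝ) := by positivity
    field_simp
  rw [this]; ring

lemma moment_two_gaussian (v : ℝ≥0) :
    ∫ x, x ^ 2 ∂(gaussianReal 0 v) = v := by
  by_cases hv : v = 0
  · subst hv; rw [gaussianReal_zero_var, integral_dirac]; norm_num
  · have h0 : ∫ x, x ^ 0 ∂(gaussianReal 0 v) = 1 := by
      simp
    have := moment_rec_gaussian hv 0
    rw [h0] at this
    simpa using this

lemma moment_four_gaussian (v : ℝ≥0) :
    ∫ x, x ^ 4 ∂(gaussianReal 0 v) = 3 * (v:ℝ) ^ 2 := by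
  by_cases hv : v = 0
  · subst hv; rw [gaussianReal_zero_var, integral_dirac]; norm_num
  · have := moment_rec_gaussian hv 2
    rw [moment_two_gaussian v] at this
    rw [show (2 + 2) = 4 from rfl] at this
    rw [this]; ring
end AuxGaussian

section AuxRV
open scoped NNReal ENNReal
variable {Ω : Type*} [MeasureSpace Ω] [IsProbabilityMeasure (volume : Measure Ω)]
  {p : ℕ} {S : Matrix (Fin p) (Fin p) ℝ} {X : Ω → Fin p → ℝ}

lemma q_nonneg (hS : S.PosDef) (c : Fin p → ℝ) : 0 ≤ c ⬝ᵥ S.mulVec c := by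
  simpa using hS.posSemidef.re_dotProduct_nonneg c

lemma measurable_lin (hX : Measurable X) (c : Fin p → ℝ) :
    Measurable (fun ω => c ⬝ᵥ X ω) := by
  apply Finset.measurable_sum
  intro i _
  exact (measurable_const.mul ((measurable_pi_apply i).comp hX))

lemma map_lin (hX : IsGaussianRV 0 S X) (c : Fin p → ℝ) :
    Measure.map (fun ω => c ⬝ᵥ X ω) volume
      = gaussianReal 0 (Real.toNNReal (c ⬝ᵥ S.mulVec c)) := by
  have := hX.2 c
  simpa [dotProduct] using this

lemma integrable_lin_pow (hX : IsGaussianRV 0 S X) (c : Fin p → ℝ) (k : ℕ) :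
    Integrable (fun ω => (c ⬝ᵥ X ω) ^ k) (volume : Measure Ω) := by
  have hm := measurable_lin hX.1 c
  have h := (integrable_map_measure (μ := (volume : Measure Ω))
    (g := fun x : ℝ => x ^ k) (f := fun ω => c ⬝ᵥ X ω)
    ((measurable_id.pow_const k).aestronglyMeasurable) hm.aemeasurable).mp
  have h2 : Integrable (fun x : ℝ => x ^ k) (Measure.map (fun ω => c ⬝ᵥ X ω) volume) := by
    rw [map_lin hX c]; exact integrable_pow_gaussianReal _ k
  exact h h2

lemma integral_lin_sq (hS : S.PosDef) (hX : IsGaussianRV 0 S X) (c : Fin p → ℝ) :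
    ∫ ω, (c ⬝ᵥ X ω) ^ 2 = c ⬝ᵥ S.mulVec c := by
  have hm := measurable_lin hX.1 c
  have h := integral_map (μ := (volume : Measure Ω)) hm.aemeasurable
    (f := fun x : ℝ => x ^ 2) ((measurable_id.pow_const 2).aestronglyMeasurable)
  rw [map_lin hX c, moment_two_gaussian, Real.coe_toNNReal _ (q_nonneg hS c)] at h
  exact h.symm

lemma integral_lin_four (hS : S.PosDef) (hX : IsGaussianRV 0 S X) (c : Fin p → ℝ) :
    ∫ ω, (c ⬝ᵥ X ω) ^ 4 = 3 * (c ⬝ᵥ S.mulVec c) ^ 2 := by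
  have hm := measurable_lin hX.1 c
  have h := integral_map (μ := (volume : Measure Ω)) hm.aemeasurable
    (f := fun x : ℝ => x ^ 4) ((measurable_id.pow_const 4).aestronglyMeasurable)
  rw [map_lin hX c, moment_four_gaussian, Real.coe_toNNReal _ (q_nonneg hS c)] at h
  exact h.symm

lemma dp_symm (hS : S.PosDef) (c d : Fin p → ℝ) :
    d ⬝ᵥ S.mulVec c = c ⬝ᵥ S.mulVec d := by
  have hsymm : ∀ i j, S i j = S j i := by
    intro i j
    conv_lhs => rw [← hS.1]
    simp [conjTranspose_apply]
  simp only [dotProduct, mulVec, Finset.mul_sum]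
  rw [Finset.sum_comm]
  apply Finset.sum_congr rfl; intro i _
  apply Finset.sum_congr rfl; intro j _
  rw [hsymm j i]; ring

lemma q_add (hS : S.PosDef) (c d : Fin p → ℝ) :
    (c + d) ⬝ᵥ S.mulVec (c + d)
      = c ⬝ᵥ S.mulVec c + d ⬝ᵥ S.mulVec d + 2 * (c ⬝ᵥ S.mulVec d) := by
  rw [mulVec_add, add_dotProduct, dotProduct_add, dotProduct_add, dp_symm hS c d]
  ring

lemma q_sub (hS : S.PosDef) (c d : Fin p → ℝ) :
    (c - d) ⬝ᵥ S.mulVec (c - d)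
      = c ⬝ᵥ S.mulVec c + d ⬝ᵥ S.mulVec d - 2 * (c ⬝ᵥ S.mulVec d) := by
  rw [mulVec_sub, sub_dotProduct, dotProduct_sub, dotProduct_sub, dp_symm hS c d]
  ring

lemma integrable_lin_mul (hX : IsGaussianRV 0 S X) (c d : Fin p → ℝ) :
    Integrable (fun ω => (c ⬝ᵥ X ω) * (d ⬝ᵥ X ω)) (volume : Measure Ω) := by
  have e1 : ∀ ω, (c ⬝ᵥ X ω) * (d ⬝ᵥ X ω)
      = (((c + d) ⬝ᵥ X ω) ^ 2 - (c ⬝ᵥ X ω) ^ 2 - (d ⬝ᵥ X ω) ^ 2) / 2 := by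
    intro ω; rw [add_dotProduct]; ring
  have := (((integrable_lin_pow hX (c + d) 2).sub (integrable_lin_pow hX c 2)).sub
    (integrable_lin_pow hX d 2)).div_const 2
  exact this.congr (Filter.Eventually.of_forall fun ω => (e1 ω).symm)

lemma integral_lin_mul (hS : S.PosDef) (hX : IsGaussianRV 0 S X) (c d : Fin p → ℝ) :
    ∫ ω, (c ⬝ᵥ X ω) * (d ⬝ᵥ X ω) = c ⬝ᵥ S.mulVec d := by
  have e1 : (fun ω => (c ⬝ᵥ X ω) * (d ⬝ᵥ X ω))
      = fun ω => (((c + d) ⬝ᵥ X ω) ^ 2 - (c ⬝ᵥ X ω) ^ 2 - (d ⬝ᵥ X ω) ^ 2) / 2 := by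
    funext ω; rw [add_dotProduct]; ring
  have h1 : Integrable (fun ω => ((c + d) ⬝ᵥ X ω) ^ 2 - (c ⬝ᵥ X ω) ^ 2)
      (volume : Measure Ω) := (integrable_lin_pow hX (c + d) 2).sub (integrable_lin_pow hX c 2)
  rw [e1]
  rw [integral_div, integral_sub h1 (integrable_lin_pow hX d 2),
    integral_sub (integrable_lin_pow hX (c + d) 2) (integrable_lin_pow hX c 2),
    integral_lin_sq hS hX, integral_lin_sq hS hX, integral_lin_sq hS hX, q_add hS]
  ring

lemma integrable_lin_mul_sq (hX : IsGaussianRV 0 S X) (c d : Fin p → ℝ) :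
    Integrable (fun ω => ((c ⬝ᵥ X ω) * (d ⬝ᵥ X ω)) ^ 2) (volume : Measure Ω) := by
  have e1 : ∀ ω, ((c ⬝ᵥ X ω) * (d ⬝ᵥ X ω)) ^ 2
      = (((c + d) ⬝ᵥ X ω) ^ 4 + ((c - d) ⬝ᵥ X ω) ^ 4
          - 2 * (c ⬝ᵥ X ω) ^ 4 - 2 * (d ⬝ᵥ X ω) ^ 4) / 12 := by
    intro ω; rw [add_dotProduct, sub_dotProduct]; ring
  have := ((((integrable_lin_pow hX (c + d) 4).add (integrable_lin_pow hX (c - d) 4)).sub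
    ((integrable_lin_pow hX c 4).const_mul 2)).sub
    ((integrable_lin_pow hX d 4).const_mul 2)).div_const 12
  exact this.congr (Filter.Eventually.of_forall fun ω => (e1 ω).symm)

lemma integral_lin_mul_sq (hS : S.PosDef) (hX : IsGaussianRV 0 S X) (c d : Fin p → ℝ) :
    ∫ ω, ((c ⬝ᵥ X ω) * (d ⬝ᵥ X ω)) ^ 2
      = (c ⬝ᵥ S.mulVec c) * (d ⬝ᵥ S.mulVec d) + 2 * (c ⬝ᵥ S.mulVec d) ^ 2 := by
  have e1 : (fun ω => ((c ⬝ᵥ X ω) * (d ⬝ᵥ X ω)) ^ 2)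
      = fun ω => (((c + d) ⬝ᵥ X ω) ^ 4 + ((c - d) ⬝ᵥ X ω) ^ 4
          - 2 * (c ⬝ᵥ X ω) ^ 4 - 2 * (d ⬝ᵥ X ω) ^ 4) / 12 := by
    funext ω; rw [add_dotProduct, sub_dotProduct]; ring
  have ha : Integrable (fun ω => ((c + d) ⬝ᵥ X ω) ^ 4 + ((c - d) ⬝ᵥ X ω) ^ 4)
      (volume : Measure Ω) := (integrable_lin_pow hX (c + d) 4).add (integrable_lin_pow hX (c - d) 4)
  have hb : Integrable (fun ω => ((c + d) ⬝ᵥ X ω) ^ 4 + ((c - d) ⬝ᵥ X ω) ^ 4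
      - 2 * (c ⬝ᵥ X ω) ^ 4) (volume : Measure Ω) :=
    ha.sub ((integrable_lin_pow hX c 4).const_mul 2)
  rw [e1, integral_div,
    integral_sub hb ((integrable_lin_pow hX d 4).const_mul 2),
    integral_sub ha ((integrable_lin_pow hX c 4).const_mul 2),
    integral_add (integrable_lin_pow hX (c + d) 4) (integrable_lin_pow hX (c - d) 4),
    integral_const_mul, integral_const_mul,
    integral_lin_four hS hX, integral_lin_four hS hX, integral_lin_four hS hX,
    integral_lin_four hS hX, q_add hS, q_sub hS]
  ring

lemma memLp_lin_mul (hX : IsGaussianRV 0 S X) (c d : Fin p → ℝ) :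
    MemLp (fun ω => (c ⬝ᵥ X ω) * (d ⬝ᵥ X ω)) 2 (volume : Measure Ω) := by
  have hm : Measurable (fun ω => (c ⬝ᵥ X ω) * (d ⬝ᵥ X ω)) :=
    (measurable_lin hX.1 c).mul (measurable_lin hX.1 d)
  rw [memLp_two_iff_integrable_sq hm.aestronglyMeasurable]
  have := integrable_lin_mul_sq hX c d
  apply this.congr
  filter_upwards with ω
  simp [pow_two]

lemma variance_lin_mul (hS : S.PosDef) (hX : IsGaussianRV 0 S X) (c d : Fin p → ℝ) :
    variance (fun ω => (c ⬝ᵥ X ω) * (d ⬝ᵥ X ω)) volume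
      = (c ⬝ᵥ S.mulVec c) * (d ⬝ᵥ S.mulVec d) + (c ⬝ᵥ S.mulVec d) ^ 2 := by
  rw [variance_eq_sub (memLp_lin_mul hX c d)]
  have h2 : ∫ ω, ((fun ω => (c ⬝ᵥ X ω) * (d ⬝ᵥ X ω)) ^ 2) ω
      = (c ⬝ᵥ S.mulVec c) * (d ⬝ᵥ S.mulVec d) + 2 * (c ⬝ᵥ S.mulVec d) ^ 2 := by
    rw [← integral_lin_mul_sq hS hX c d]
    apply integral_congr_ae
    filter_upwards with ω
    simp [pow_two]
  rw [h2, integral_lin_mul hS hX]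
  ring
end AuxRV

section AuxLinAlg
variable {p s : ℕ} {S : Matrix (Fin p) (Fin p) ℝ} {φ : Fin s → Fin p}

lemma selMat_tmul (hφ : Function.Injective φ) : (selMat φ)ᵀ * selMat φ = 1 := by
  ext b b'
  simp only [Matrix.mul_apply, selMat, transpose_apply, Matrix.of_apply, ite_mul, one_mul,
    zero_mul, Finset.sum_ite_eq', Finset.mem_univ, if_true]
  simp [Matrix.one_apply, hφ.eq_iff]

lemma selMat_tvec (v : Fin p → ℝ) : (selMat φ)ᵀ *ᵥ v = fun b => v (φ b) := by
  funext b
  simp [mulVec, dotProduct, selMat, transpose_apply]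

lemma selMat_vec (u : Fin s → ℝ) :
    selMat φ *ᵥ u = fun a => ∑ b, if a = φ b then u b else 0 := by
  funext a
  simp [mulVec, dotProduct, selMat, ite_mul]

lemma supp_fact (hφ : Function.Injective φ) {w : Fin p → ℝ}
    (hsupp : ∀ l, l ∉ Set.range φ → w l = 0) :
    selMat φ *ᵥ ((selMat φ)ᵀ *ᵥ w) = w := by
  rw [selMat_tvec, selMat_vec]
  funext a
  by_cases ha : a ∈ Set.range φ
  · obtain ⟨b0, rfl⟩ := ha
    rw [Finset.sum_eq_single b0]
    · simp
    · intro b _ hb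
      rw [if_neg]
      exact fun h => hb (hφ h.symm)
    · simp
  · rw [Finset.sum_eq_zero, (hsupp a ha)]
    intro b _
    rw [if_neg]
    exact fun h => ha ⟨b, h.symm⟩

lemma Q_posDef (hS : S.PosDef) (hφ : Function.Injective φ) :
    ((selMat φ)ᵀ * S * selMat φ).PosDef := by
  refine Matrix.PosDef.of_dotProduct_mulVec_pos ?_ ?_
  · have hs : Sᵀ = S := hS.1
    show ((selMat φ)ᵀ * S * selMat φ)ᴴ = _
    rw [conjTranspose_eq_transpose_of_trivial, transpose_mul, transpose_mul,
      transpose_transpose, hs, Matrix.mul_assoc]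
  · intro x hx
    have hBx : selMat φ *ᵥ x ≠ 0 := by
      intro h
      apply hx
      have := congrArg (fun v => (selMat φ)ᵀ *ᵥ v) h
      simpa [mulVec_mulVec, selMat_tmul hφ] using this
    have key : ∀ (z : Fin s → ℝ) (y : Fin p → ℝ),
        (selMat φ *ᵥ z) ⬝ᵥ y = z ⬝ᵥ ((selMat φ)ᵀ *ᵥ y) := by
      intro z y
      rw [dotProduct_mulVec, vecMul_transpose]
    have h1 := hS.dotProduct_mulVec_pos hBx
    rw [star_trivial, key, mulVec_mulVec, mulVec_mulVec] at h1
    simpa using h1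

section Main
variable (hS : S.PosDef) (hφ : Function.Injective φ) {i j : Fin p}

lemma hSt (hS : S.PosDef) : Sᵀ = S := hS.1

lemma hSdet (hS : S.PosDef) : IsUnit S.det := isUnit_iff_ne_zero.mpr hS.det_pos.ne'

lemma A1 (hS : S.PosDef) (i : Fin p) :
    S *ᵥ (fun l => S⁻¹ l i) = Pi.single i 1 := by
  funext l
  have h : S * S⁻¹ = 1 := Matrix.mul_nonsing_inv S (hSdet hS)
  have : (S *ᵥ (fun l => S⁻¹ l i)) l = (S * S⁻¹) l i := by
    simp [mulVec, dotProduct, Matrix.mul_apply]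
  rw [this, h]
  simp [Matrix.one_apply, Pi.single_apply]

lemma key2 {q : ℕ} (M : Matrix (Fin p) (Fin q) ℝ) (v : Fin q → ℝ) (y : Fin p → ℝ) :
    (M *ᵥ v) ⬝ᵥ y = v ⬝ᵥ (Mᵀ *ᵥ y) := by
  rw [dotProduct_mulVec, vecMul_transpose]

lemma hQ1 (hS : S.PosDef) (hφ : Function.Injective φ) :
    ((selMat φ)ᵀ * S * selMat φ) * ((selMat φ)ᵀ * S * selMat φ)⁻¹ = 1 :=
  Matrix.mul_nonsing_inv _ (isUnit_iff_ne_zero.mpr (Q_posDef hS hφ).det_pos.ne')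

lemma hQ2 (hS : S.PosDef) (hφ : Function.Injective φ) :
    ((selMat φ)ᵀ * S * selMat φ)⁻¹ * ((selMat φ)ᵀ * S * selMat φ) = 1 :=
  Matrix.nonsing_inv_mul _ (isUnit_iff_ne_zero.mpr (Q_posDef hS hφ).det_pos.ne')

lemma hΩt (hS : S.PosDef) (hφ : Function.Injective φ) :
    (((selMat φ)ᵀ * S * selMat φ)⁻¹)ᵀ = ((selMat φ)ᵀ * S * selMat φ)⁻¹ := by
  rw [Matrix.transpose_nonsing_inv]
  congr 1
  rw [transpose_mul, transpose_mul, transpose_transpose, hSt hS, Matrix.mul_assoc]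

lemma hfold (hS : S.PosDef) (hφ : Function.Injective φ) {q : ℕ}
    (N : Matrix (Fin s) (Fin q) ℝ) :
    (selMat φ)ᵀ * (S * (selMat φ * (((selMat φ)ᵀ * S * selMat φ)⁻¹ * N))) = N := by
  have h := hQ1 hS hφ
  calc (selMat φ)ᵀ * (S * (selMat φ * (((selMat φ)ᵀ * S * selMat φ)⁻¹ * N)))
      = (((selMat φ)ᵀ * S * selMat φ) * ((selMat φ)ᵀ * S * selMat φ)⁻¹) * N := by
        simp only [Matrix.mul_assoc]
    _ = N := by rw [h, Matrix.one_mul]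

lemma hPw (hS : S.PosDef) (hφ : Function.Injective φ) (i : Fin p)
    (hsupp : ∀ l, l ∉ Set.range φ → S⁻¹ l i = 0) :
    (selMat φ * ((selMat φ)ᵀ * S * selMat φ)⁻¹ * (selMat φ)ᵀ * S) *ᵥ (fun l => S⁻¹ l i)
      = (fun l => S⁻¹ l i) := by
  set B := selMat φ
  set w : Fin p → ℝ := fun l => S⁻¹ l i with hw
  have hsup : B *ᵥ (Bᵀ *ᵥ w) = w := supp_fact hφ hsupp
  set u : Fin s → ℝ := Bᵀ *ᵥ w with hu
  have h1 : (B * (Bᵀ * S * B)⁻¹ * Bᵀ * S) *ᵥ w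
      = (B * (Bᵀ * S * B)⁻¹ * Bᵀ * S) *ᵥ (B *ᵥ u) := by rw [hsup]
  rw [h1, mulVec_mulVec]
  have h2 : B * (Bᵀ * S * B)⁻¹ * Bᵀ * S * B = B := by
    calc B * (Bᵀ * S * B)⁻¹ * Bᵀ * S * B
        = B * ((Bᵀ * S * B)⁻¹ * (Bᵀ * S * B)) := by simp only [Matrix.mul_assoc]
      _ = B := by rw [hQ2 hS hφ, Matrix.mul_one]
  rw [h2, hsup]

lemma hPt (hS : S.PosDef) (hφ : Function.Injective φ) :
    (selMat φ * ((selMat φ)ᵀ * S * selMat φ)⁻¹ * (selMat φ)ᵀ * S)ᵀ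
      = S * (selMat φ * (((selMat φ)ᵀ * S * selMat φ)⁻¹ * (selMat φ)ᵀ)) := by
  simp only [transpose_mul, transpose_transpose]
  rw [hSt hS, hΩt hS hφ]

lemma hPtS (hS : S.PosDef) (hφ : Function.Injective φ) :
    (selMat φ * ((selMat φ)ᵀ * S * selMat φ)⁻¹ * (selMat φ)ᵀ * S)ᵀ * S
      = S * (selMat φ * ((selMat φ)ᵀ * S * selMat φ)⁻¹ * (selMat φ)ᵀ * S) := by
  rw [hPt hS hφ]
  simp only [Matrix.mul_assoc]

lemma hR (hS : S.PosDef) (hφ : Function.Injective φ) :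
    S * (selMat φ * ((selMat φ)ᵀ * S * selMat φ)⁻¹ * (selMat φ)ᵀ * S)
      = S * selMat φ * ((selMat φ)ᵀ * S * selMat φ)⁻¹ * (selMat φ)ᵀ * S := by
  simp only [Matrix.mul_assoc]

lemma hPtR (hS : S.PosDef) (hφ : Function.Injective φ) :
    (selMat φ * ((selMat φ)ᵀ * S * selMat φ)⁻¹ * (selMat φ)ᵀ * S)ᵀ
        * (S * selMat φ * ((selMat φ)ᵀ * S * selMat φ)⁻¹ * (selMat φ)ᵀ * S)
      = S * selMat φ * ((selMat φ)ᵀ * S * selMat φ)⁻¹ * (selMat φ)ᵀ * S := by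
  rw [hPt hS hφ]
  calc S * (selMat φ * (((selMat φ)ᵀ * S * selMat φ)⁻¹ * (selMat φ)ᵀ))
        * (S * selMat φ * ((selMat φ)ᵀ * S * selMat φ)⁻¹ * (selMat φ)ᵀ * S)
      = S * (selMat φ * (((selMat φ)ᵀ * S * selMat φ)⁻¹
          * ((selMat φ)ᵀ * (S * (selMat φ * (((selMat φ)ᵀ * S * selMat φ)⁻¹
              * ((selMat φ)ᵀ * S))))))) := by
        simp only [Matrix.mul_assoc]
    _ = S * (selMat φ * (((selMat φ)ᵀ * S * selMat φ)⁻¹ * ((selMat φ)ᵀ * S))) := by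
        rw [hfold hS hφ]
    _ = S * selMat φ * ((selMat φ)ᵀ * S * selMat φ)⁻¹ * (selMat φ)ᵀ * S := by
        simp only [Matrix.mul_assoc]

end Main

section Final
variable (hS : S.PosDef) (hφ : Function.Injective φ) {i j : Fin p}

lemma ej_dot_ei {i j : Fin p} (hij : i ≠ j) :
    (Pi.single j 1 : Fin p → ℝ) ⬝ᵥ (Pi.single i 1 : Fin p → ℝ) = 0 := by
  simp [dotProduct, Pi.single_apply, Finset.sum_ite_eq]
  exact fun h => hij h

lemma main3 (hS : S.PosDef) (i : Fin p) :
    (fun l => S⁻¹ l i) ⬝ᵥ S *ᵥ (fun l => S⁻¹ l i) = S⁻¹ i i := by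
  rw [A1 hS i]
  simp [dotProduct, Pi.single_apply]

lemma main1 (hS : S.PosDef) (hφ : Function.Injective φ) (hij : i ≠ j)
    (hsupp : ∀ l, l ∉ Set.range φ → S⁻¹ l i = 0) :
    ((Pi.single j 1 : Fin p → ℝ)
        - (selMat φ * ((selMat φ)ᵀ * S * selMat φ)⁻¹ * (selMat φ)ᵀ * S).mulVec
            (Pi.single j 1 : Fin p → ℝ)) ⬝ᵥ S *ᵥ (fun l => S⁻¹ l i) = 0 := by
  set B := selMat φ
  set P := B * (Bᵀ * S * B)⁻¹ * Bᵀ * S with hP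
  set w : Fin p → ℝ := fun l => S⁻¹ l i with hwdef
  rw [sub_dotProduct]
  have h1 : (Pi.single j 1 : Fin p → ℝ) ⬝ᵥ S *ᵥ w = 0 := by
    rw [A1 hS i]; exact ej_dot_ei hij
  have h2 : (P *ᵥ (Pi.single j 1 : Fin p → ℝ)) ⬝ᵥ S *ᵥ w = 0 := by
    rw [key2, mulVec_mulVec, hPtS hS hφ, ← mulVec_mulVec, hPw hS hφ i hsupp]
    exact h1
  rw [h1, h2, sub_zero]

lemma ejSej (j : Fin p) :
    (Pi.single j 1 : Fin p → ℝ) ⬝ᵥ S *ᵥ (Pi.single j 1 : Fin p → ℝ) = S j j := by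
  simp [dotProduct, mulVec, Pi.single_apply, Finset.sum_ite_eq]

lemma main2 (hS : S.PosDef) (hφ : Function.Injective φ) (j : Fin p) :
    ((Pi.single j 1 : Fin p → ℝ)
        - (selMat φ * ((selMat φ)ᵀ * S * selMat φ)⁻¹ * (selMat φ)ᵀ * S).mulVec
            (Pi.single j 1 : Fin p → ℝ)) ⬝ᵥ S *ᵥ
      ((Pi.single j 1 : Fin p → ℝ)
        - (selMat φ * ((selMat φ)ᵀ * S * selMat φ)⁻¹ * (selMat φ)ᵀ * S).mulVec
            (Pi.single j 1 : Fin p → ℝ))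
      = S j j - (Pi.single j 1 : Fin p → ℝ) ⬝ᵥ
          (S * selMat φ * ((selMat φ)ᵀ * S * selMat φ)⁻¹ * (selMat φ)ᵀ * S).mulVec
            (Pi.single j 1 : Fin p → ℝ) := by
  set B := selMat φ
  set P := B * (Bᵀ * S * B)⁻¹ * Bᵀ * S with hPdef
  set R := S * B * (Bᵀ * S * B)⁻¹ * Bᵀ * S with hRdef
  set ej : Fin p → ℝ := Pi.single j 1 with hej
  have hSP : S * P = R := by rw [hPdef, hRdef]; simp only [Matrix.mul_assoc]
  rw [mulVec_sub, sub_dotProduct, dotProduct_sub, dotProduct_sub]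
  have t1 : ej ⬝ᵥ S *ᵥ (P *ᵥ ej) = ej ⬝ᵥ R *ᵥ ej := by
    rw [mulVec_mulVec, hSP]
  have t2 : (P *ᵥ ej) ⬝ᵥ S *ᵥ ej = ej ⬝ᵥ R *ᵥ ej := by
    rw [key2, mulVec_mulVec, hPtS hS hφ, hSP]
  have hRP : R * P = R := by
    have h1 : R = Pᵀ * S := by rw [hPtS hS hφ, hSP]
    conv_lhs => rw [h1, Matrix.mul_assoc, hSP, hPtR hS hφ]
  have t3 : (P *ᵥ ej) ⬝ᵥ S *ᵥ (P *ᵥ ej) = ej ⬝ᵥ R *ᵥ ej := by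
    rw [key2, mulVec_mulVec, hPtS hS hφ, hSP, mulVec_mulVec, hRP]
  rw [t1, t2, t3, ejSej]
  ring

end Final

end AuxLinAlg

lemma sum_comm_triple {ι κ τ M : Type*} [Fintype ι] [Fintype κ] [Fintype τ]
    [AddCommMonoid M] (f : ι → κ → τ → M) :
    ∑ r, ∑ c, ∑ k, f r c k = ∑ k, ∑ c, ∑ r, f r c k :=
  calc ∑ r, ∑ c, ∑ k, f r c k
      = ∑ r, ∑ k, ∑ c, f r c k := Finset.sum_congr rfl (fun r _ => Finset.sum_comm)
    _ = ∑ k, ∑ r, ∑ c, f r c k := Finset.sum_comm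
    _ = ∑ k, ∑ c, ∑ r, f r c k := Finset.sum_congr rfl (fun k _ => Finset.sum_comm)

/-- fix `i ≠ j` with `ω*_{ij} = 0`.  With `B = B_{i,0}` the selection matrix
of the support of `w*_i`, `Ω_i* = (Bᵀ Σ* B)⁻¹`, and `a = e_j − B Ω_i* Bᵀ Σ* e_j`, we have
`E(aᵀ V_n w*_i) = 0` and
`Var(aᵀ V_n w*_i) = (ω*_{ii} σ*_{jj} − ω*_{ii} e_jᵀ Σ* B Ω_i* Bᵀ Σ* e_j)/n`. -/
theorem statement12 {Ω : Type*} [MeasureSpace Ω] [IsProbabilityMeasure (volume : Measure Ω)]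
    {n p s : ℕ} (hn : 0 < n) (S : Matrix (Fin p) (Fin p) ℝ) (hS : S.PosDef)
    (X : Fin n → Ω → Fin p → ℝ) (hX : IsIIDGaussian (fun _ => 0) S X)
    (i j : Fin p) (hij : i ≠ j) (hzero : S⁻¹ i j = 0)
    (φ : Fin s → Fin p) (hφ : Function.Injective φ)
    (hsupp : Set.range φ = {l | S⁻¹ l i ≠ 0}) :
    let B := selMat φ
    let a : Fin p → ℝ := (Pi.single j 1 : Fin p → ℝ)
        - (B * (Bᵀ * S * B)⁻¹ * Bᵀ * S).mulVec (Pi.single j 1 : Fin p → ℝ)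
    (∫ ω, a ⬝ᵥ (Vmat X ω).mulVec (fun l => S⁻¹ l i) ∂volume = 0) ∧
    variance (fun ω => a ⬝ᵥ (Vmat X ω).mulVec (fun l => S⁻¹ l i)) volume
      = (S⁻¹ i i * S j j
          - S⁻¹ i i * ((Pi.single j 1 : Fin p → ℝ) ⬝ᵥ
              (S * B * (Bᵀ * S * B)⁻¹ * Bᵀ * S).mulVec (Pi.single j 1 : Fin p → ℝ))) / n := by
  intro B a
  have hGk : ∀ k, IsGaussianRV 0 S (X k) := hX.2
  set w : Fin p → ℝ := fun l => S⁻¹ l i with hwdef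
  have hsupp' : ∀ l, l ∉ Set.range φ → S⁻¹ l i = 0 := by
    intro l hl
    rw [hsupp] at hl
    simpa using hl
  have haeq : a = (Pi.single j 1 : Fin p → ℝ)
      - (selMat φ * ((selMat φ)ᵀ * S * selMat φ)⁻¹ * (selMat φ)ᵀ * S).mulVec
          (Pi.single j 1 : Fin p → ℝ) := rfl
  have hrho : a ⬝ᵥ S *ᵥ w = 0 := by rw [haeq]; exact main1 hS hφ hij hsupp'
  have hqw : w ⬝ᵥ S *ᵥ w = S⁻¹ i i := main3 hS i
  have hqa : a ⬝ᵥ S *ᵥ a = S j j - (Pi.single j 1 : Fin p → ℝ) ⬝ᵥ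
      (S * B * (Bᵀ * S * B)⁻¹ * Bᵀ * S).mulVec (Pi.single j 1 : Fin p → ℝ) := by
    rw [haeq]; exact main2 hS hφ j
  set Z : Fin n → Ω → ℝ := fun k ω => (a ⬝ᵥ X k ω) * (w ⬝ᵥ X k ω) with hZdef
  have hT : (fun ω => a ⬝ᵥ (Vmat X ω).mulVec w) = fun ω => (n:ℝ)⁻¹ * ∑ k, Z k ω := by
    funext ω
    rw [Vmat, smul_mulVec, dotProduct_smul, smul_eq_mul]
    congr 1
    simp only [hZdef, mulVec, dotProduct, Matrix.of_apply, Finset.sum_mul, Finset.mul_sum]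
    rw [sum_comm_triple]
    apply Finset.sum_congr rfl; intro k _
    apply Finset.sum_congr rfl; intro c _
    apply Finset.sum_congr rfl; intro r _
    ring
  have hn' : (n:ℝ) ≠ 0 := Nat.cast_ne_zero.mpr hn.ne'
  constructor
  · show ∫ ω, a ⬝ᵥ (Vmat X ω).mulVec w = 0
    rw [hT, integral_const_mul, integral_finset_sum _
      (fun k _ => integrable_lin_mul (hGk k) a w)]
    have : ∀ k : Fin n, ∫ ω, Z k ω = 0 := by
      intro k
      show ∫ ω, (a ⬝ᵥ X k ω) * (w ⬝ᵥ X k ω) = 0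
      rw [integral_lin_mul hS (hGk k) a w, hrho]
    rw [Finset.sum_congr rfl (fun k _ => this k)]
    simp
  · show variance (fun ω => a ⬝ᵥ (Vmat X ω).mulVec w) volume = _
    rw [hT]
    have h1 : (fun ω => (n:ℝ)⁻¹ * ∑ k, Z k ω) = (n:ℝ)⁻¹ • (∑ k, Z k) := by
      funext ω; simp [Finset.sum_apply]
    rw [h1, variance_smul]
    have hg : Measurable (fun x : Fin p → ℝ => (a ⬝ᵥ x) * (w ⬝ᵥ x)) := by
      apply Measurable.mul <;>
        · apply Finset.measurable_sum
          intro l _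
          exact measurable_const.mul (measurable_pi_apply l)
    have h2 : variance (∑ k, Z k) volume = ∑ k : Fin n, variance (Z k) volume := by
      apply IndepFun.variance_sum
      · intro k _; exact memLp_lin_mul (hGk k) a w
      · intro k _ k' _ hkk'
        exact (hX.1.indepFun hkk').comp hg hg
    rw [h2]
    have h3 : ∀ k : Fin n, variance (Z k) volume
        = (a ⬝ᵥ S *ᵥ a) * (w ⬝ᵥ S *ᵥ w) := by
      intro k
      show variance (fun ω => (a ⬝ᵥ X k ω) * (w ⬝ᵥ X k ω)) volume = _
      rw [variance_lin_mul hS (hGk k) a w, hrho]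
      ring
    rw [Finset.sum_congr rfl (fun k _ => h3 k), Finset.sum_const, Finset.card_univ,
      Fintype.card_fin, nsmul_eq_mul, hqa, hqw]
    field_simp
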